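/- arXiv:1810.12202 — 3 statements merged into one kernel-verified Lean document; each statement's English description precedes it below -/
import Mathlib

section
/- Let X and Y be points of the unit square [0,1]² and consider the integral of the Euclidean distance ‖X − Y‖ over ([0,1]²) × ([0,1]²) with respect to the 4-dimensional Lebesgue measure. This integral equals (2 + √2 + 5·ln(1 + √2))/15. (Equivalently, the expected Euclidean distance between two independent uniformly distributed points of the unit square is (2 + √2 + 5·ln(1 + √2))/15 ≈ 0.52.) -/
open MeasureTheory Real

section EuclideanDistanceAux
open Set

lemma inner_eval {t : ℝ} (ht : 0 < t) :
    ∫ s in (0:ℝ)..t, (1 - s) * Real.sqrt (s^2 + t^2)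
      = (Real.sqrt 2 + Real.log (1 + Real.sqrt 2))/2 * t^2
        + (1 - 2*Real.sqrt 2)/3 * t^3 := by
  have ht0 : t ≠ 0 := ne_of_gt ht
  set A : ℝ → ℝ := fun s =>
    s * Real.sqrt (s^2 + t^2)/2 + t^2/2 * Real.arsinh (s/t)
      - (Real.sqrt (s^2 + t^2))^3/3 with hA
  have hderiv : ∀ s : ℝ, HasDerivAt A ((1 - s) * Real.sqrt (s^2 + t^2)) s := by
    intro s
    have hpos : 0 < s^2 + t^2 := by positivity
    have hRpos : 0 < Real.sqrt (s^2 + t^2) := Real.sqrt_pos.2 hpos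
    have hRne : Real.sqrt (s^2 + t^2) ≠ 0 := ne_of_gt hRpos
    have hRsq : Real.sqrt (s^2 + t^2) ^ 2 = s^2 + t^2 := Real.sq_sqrt hpos.le
    have hinner : HasDerivAt (fun s : ℝ => s^2 + t^2) (2*s) s := by
      simpa using ((hasDerivAt_pow 2 s).add_const (t^2))
    have hR : HasDerivAt (fun s : ℝ => Real.sqrt (s^2 + t^2))
        (s / Real.sqrt (s^2 + t^2)) s := by
      have := (Real.hasDerivAt_sqrt (ne_of_gt hpos)).comp s hinner
      refine this.congr_deriv ?_; symm
      field_simp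
    have h1 : HasDerivAt (fun s : ℝ => s * Real.sqrt (s^2 + t^2)/2)
        ((Real.sqrt (s^2 + t^2) + s * (s / Real.sqrt (s^2 + t^2)))/2) s := by
      simpa using ((hasDerivAt_id s).mul hR).div_const 2
    have h2 : HasDerivAt (fun s : ℝ => t^2/2 * Real.arsinh (s/t))
        (t^2/2 * ((Real.sqrt (1 + (s/t)^2))⁻¹ * (1/t))) s := by
      have hst : HasDerivAt (fun s : ℝ => s/t) (1/t) s := by
        simpa using (hasDerivAt_id s).div_const t
      exact ((Real.hasDerivAt_arsinh (s/t)).comp s hst).const_mul _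
    have h3 : HasDerivAt (fun s : ℝ => (Real.sqrt (s^2 + t^2))^3/3)
        (s * Real.sqrt (s^2 + t^2)) s := by
      have := ((hR.pow 3).div_const 3)
      refine this.congr_deriv ?_; symm
      field_simp
      ring
    have hsq : Real.sqrt (1 + (s/t)^2) = Real.sqrt (s^2 + t^2) / t := by
      rw [show 1 + (s/t)^2 = (s^2+t^2)/t^2 by field_simp; ring, Real.sqrt_div hpos.le,
        Real.sqrt_sq ht.le]
    have := (h1.add h2).sub h3
    refine this.congr_deriv ?_; symm
    rw [hsq]
    field_simp
    linear_combination hRsq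
  have hcont : Continuous (fun s : ℝ => (1 - s) * Real.sqrt (s^2 + t^2)) := by
    fun_prop
  have := intervalIntegral.integral_eq_sub_of_hasDerivAt
    (a := (0:ℝ)) (b := t) (f := A) (f' := fun s => (1 - s) * Real.sqrt (s^2 + t^2))
    (fun s _ => hderiv s) (hcont.intervalIntegrable _ _)
  rw [this]
  have e0 : A 0 = - t^3/3 := by
    simp only [hA]
    norm_num
    rw [Real.sqrt_sq ht.le]
    ring
  have e1 : A t = t^2 * Real.sqrt 2/2 + t^2/2 * Real.log (1 + Real.sqrt 2)
      - 2 * Real.sqrt 2 * t^3/3 := by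
    simp only [hA]
    have h2t : Real.sqrt (t^2 + t^2) = Real.sqrt 2 * t := by
      rw [show t^2 + t^2 = 2 * t^2 by ring, Real.sqrt_mul (by norm_num), Real.sqrt_sq ht.le]
    rw [h2t, div_self ht0]
    have hars : Real.arsinh 1 = Real.log (1 + Real.sqrt 2) := by
      rw [Real.arsinh]
      norm_num
    rw [hars]
    have s2 : Real.sqrt 2 ^ 2 = 2 := Real.sq_sqrt (by norm_num)
    ring_nf
    linear_combination ((-(t^3)) * Real.sqrt 2 / 3) * s2
  rw [e0, e1]
  ring

lemma my_swap (f : ℝ → ℝ → ℝ) (hf : Continuous (Function.uncurry f)) :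
    ∫ x in (0:ℝ)..1, ∫ y in (0:ℝ)..1, f x y = ∫ y in (0:ℝ)..1, ∫ x in (0:ℝ)..1, f x y := by
  have h0 : (0:ℝ) ≤ 1 := zero_le_one
  simp only [intervalIntegral.integral_of_le h0]
  have hint : Integrable (Function.uncurry f)
      ((volume.restrict (Ioc (0:ℝ) 1)).prod (volume.restrict (Ioc (0:ℝ) 1))) := by
    rw [Measure.prod_restrict, ← Measure.volume_eq_prod]
    exact (hf.continuousOn.integrableOn_compact (isCompact_Icc.prod isCompact_Icc)).mono_set
      (Set.prod_mono Ioc_subset_Icc_self Ioc_subset_Icc_self)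
  exact MeasureTheory.integral_integral_swap hint

lemma L1 (h : ℝ → ℝ) (hc : Continuous h) (he : ∀ s, h (-s) = h s) :
    (∫ x in (0:ℝ)..1, ∫ u in (0:ℝ)..1, h (x - u)) = 2 * ∫ s in (0:ℝ)..1, (1 - s) * h s := by
  set H : ℝ → ℝ := fun y => ∫ s in (0:ℝ)..y, h s with hH
  have hHd : ∀ y, HasDerivAt H (h y) y := fun y =>
    intervalIntegral.integral_hasDerivAt_right (hc.intervalIntegrable _ _)
      (hc.stronglyMeasurableAtFilter _ _) hc.continuousAt
  have hHcont : Continuous H :=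
    intervalIntegral.continuous_primitive (fun a b => hc.intervalIntegrable a b) 0
  have hHodd : ∀ y, H (-y) = - H y := by
    intro y
    have h1 : ∫ s in (0:ℝ)..y, h (-s) = ∫ s in (-y)..(-(0:ℝ)), h s :=
      intervalIntegral.integral_comp_neg h
    have h2 : (∫ s in (0:ℝ)..y, h (-s)) = H y := by
      apply intervalIntegral.integral_congr; intro s _; exact he s
    rw [h2] at h1
    have h3 : (∫ s in (-y)..(-(0:ℝ)), h s) = - ∫ s in (-(0:ℝ))..(-y), h s :=
      (intervalIntegral.integral_symm _ _)
    rw [h3] at h1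
    simp only [neg_zero] at h1
    simp only [hH]
    linarith
  have step1 : ∀ x : ℝ, (∫ u in (0:ℝ)..1, h (x - u)) = H x - H (x - 1) := by
    intro x
    rw [intervalIntegral.integral_comp_sub_left h x]
    have h7 := intervalIntegral.integral_interval_sub_left (μ := volume)
      (hc.intervalIntegrable (0:ℝ) x) (hc.intervalIntegrable (0:ℝ) (x-1))
    rw [sub_zero]
    exact h7.symm
  have step2 : (∫ x in (0:ℝ)..1, (H x - H (x-1))) = 2 * ∫ x in (0:ℝ)..1, H x := by
    have hc2 : Continuous (fun x : ℝ => H (x - 1)) :=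
      hHcont.comp (continuous_id.sub continuous_const)
    rw [intervalIntegral.integral_sub (hHcont.intervalIntegrable _ _)
      (hc2.intervalIntegrable _ _)]
    have h4 : (∫ x in (0:ℝ)..1, H (x - 1)) = ∫ x in ((0:ℝ)-1)..((1:ℝ)-1), H x :=
      intervalIntegral.integral_comp_sub_right H 1
    have h6 : (∫ x in (0:ℝ)..1, H (-x)) = - ∫ x in (0:ℝ)..1, H x := by
      rw [intervalIntegral.integral_congr (g := fun x => - H x) (fun x _ => hHodd x)]
      exact intervalIntegral.integral_neg
    have h5 : (∫ x in (-(1:ℝ))..(-(0:ℝ)), H x) = - ∫ x in (0:ℝ)..1, H x := by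
      rw [← intervalIntegral.integral_comp_neg H, h6]
    simp only [neg_zero] at h5
    rw [h4]
    norm_num
    rw [h5]
    ring
  have step3 : (∫ x in (0:ℝ)..1, H x) = ∫ s in (0:ℝ)..1, (1 - s) * h s := by
    have hu : ∀ x ∈ uIcc (0:ℝ) 1, HasDerivAt H (h x) x := fun x _ => hHd x
    have hv : ∀ x ∈ uIcc (0:ℝ) 1, HasDerivAt (fun x : ℝ => x - 1) 1 x := fun x _ =>
      (hasDerivAt_id x).sub_const 1
    have parts := intervalIntegral.integral_mul_deriv_eq_deriv_mul hu hv
      (hc.intervalIntegrable _ _) (intervalIntegrable_const)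
    simp only [mul_one] at parts
    rw [parts]
    have hH0 : H 0 = 0 := intervalIntegral.integral_same
    rw [hH0]
    norm_num
    rw [← intervalIntegral.integral_neg]
    apply intervalIntegral.integral_congr
    intro s _
    ring
  calc (∫ x in (0:ℝ)..1, ∫ u in (0:ℝ)..1, h (x - u))
      = ∫ x in (0:ℝ)..1, (H x - H (x-1)) := intervalIntegral.integral_congr (fun x _ => step1 x)
    _ = 2 * ∫ x in (0:ℝ)..1, H x := step2
    _ = 2 * ∫ s in (0:ℝ)..1, (1 - s) * h s := by rw [step3]

noncomputable def FF (s t : ℝ) : ℝ := (1 - s) * (1 - t) * Real.sqrt (s^2 + t^2)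

lemma FF_cont : Continuous (Function.uncurry FF) := by
  unfold Function.uncurry FF
  fun_prop

lemma FF_cont' (t : ℝ) : Continuous (fun s => FF s t) := by
  unfold FF; fun_prop

lemma FF_symm (s t : ℝ) : FF s t = FF t s := by
  unfold FF; rw [add_comm (s^2)]; ring

lemma tri_swap :
    (∫ t in (0:ℝ)..1, ∫ s in t..(1:ℝ), FF s t)
      = ∫ t in (0:ℝ)..1, ∫ s in (0:ℝ)..t, FF s t := by
  have h0 : (0:ℝ) ≤ 1 := zero_le_one
  set Φ : ℝ → ℝ → ℝ := fun t s => if t < s then FF s t else 0 with hΦ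
  have hbase : Integrable (fun p : ℝ × ℝ => FF p.2 p.1)
      ((volume.restrict (Ioc (0:ℝ) 1)).prod (volume.restrict (Ioc (0:ℝ) 1))) := by
    rw [Measure.prod_restrict, ← Measure.volume_eq_prod]
    have hc : Continuous fun p : ℝ × ℝ => FF p.2 p.1 :=
      FF_cont.comp (continuous_snd.prodMk continuous_fst)
    exact (hc.continuousOn.integrableOn_compact (isCompact_Icc.prod isCompact_Icc)).mono_set
      (Set.prod_mono Ioc_subset_Icc_self Ioc_subset_Icc_self)
  have hΦint : Integrable (Function.uncurry Φ)
      ((volume.restrict (Ioc (0:ℝ) 1)).prod (volume.restrict (Ioc (0:ℝ) 1))) := by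
    have huncurry : Function.uncurry Φ
        = Set.indicator {p : ℝ × ℝ | p.1 < p.2} (fun p => FF p.2 p.1) := by
      funext p
      simp only [Function.uncurry, hΦ, Set.indicator_apply, Set.mem_setOf_eq]
    rw [huncurry]
    exact hbase.indicator (measurableSet_lt measurable_fst measurable_snd)
  have stepA : ∀ t ∈ Ioc (0:ℝ) 1,
      (∫ s in t..(1:ℝ), FF s t) = ∫ s in Ioc (0:ℝ) 1, Φ t s := by
    intro t ht
    rw [intervalIntegral.integral_of_le ht.2]
    have : ∫ s in Ioc (0:ℝ) 1, Φ t s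
        = ∫ s in Ioc (0:ℝ) 1, (Ioc t 1).indicator (fun s => FF s t) s := by
      apply setIntegral_congr_fun measurableSet_Ioc
      intro s hs
      simp only [hΦ, Set.indicator_apply, Set.mem_Ioc]
      by_cases h : t < s
      · simp [h, hs.2]
      · simp [h]
    rw [this, setIntegral_indicator measurableSet_Ioc]
    congr 1
    rw [Set.Ioc_inter_Ioc, max_eq_right ht.1.le, min_self]
  have stepC : ∀ s ∈ Ioc (0:ℝ) 1,
      (∫ t in Ioc (0:ℝ) 1, Φ t s) = ∫ t in (0:ℝ)..s, FF s t := by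
    intro s hs
    have h1 : ∫ t in Ioc (0:ℝ) 1, Φ t s
        = ∫ t in Ioc (0:ℝ) 1, (Iio s).indicator (fun t => FF s t) t := by
      apply setIntegral_congr_fun measurableSet_Ioc
      intro t _
      simp only [hΦ, Set.indicator_apply, Set.mem_Iio]
    rw [h1, setIntegral_indicator measurableSet_Iio]
    have h2 : Ioc (0:ℝ) 1 ∩ Iio s = Ioo 0 s := by
      ext x
      simp only [Set.mem_inter_iff, Set.mem_Ioc, Set.mem_Iio, Set.mem_Ioo]
      constructor
      · rintro ⟨⟨hx1, _⟩, hx3⟩; exact ⟨hx1, hx3⟩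
      · rintro ⟨hx1, hx3⟩; exact ⟨⟨hx1, le_trans (le_of_lt hx3) hs.2⟩, hx3⟩
    rw [h2, ← integral_Ioc_eq_integral_Ioo, ← intervalIntegral.integral_of_le hs.1.le]
  calc (∫ t in (0:ℝ)..1, ∫ s in t..(1:ℝ), FF s t)
      = ∫ t in Ioc (0:ℝ) 1, ∫ s in Ioc (0:ℝ) 1, Φ t s := by
        rw [intervalIntegral.integral_of_le h0]
        exact setIntegral_congr_fun measurableSet_Ioc (fun t ht => stepA t ht)
    _ = ∫ s in Ioc (0:ℝ) 1, ∫ t in Ioc (0:ℝ) 1, Φ t s := integral_integral_swap hΦint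
    _ = ∫ s in Ioc (0:ℝ) 1, ∫ t in (0:ℝ)..s, FF s t :=
        setIntegral_congr_fun measurableSet_Ioc (fun s hs => stepC s hs)
    _ = ∫ s in (0:ℝ)..1, ∫ t in (0:ℝ)..s, FF s t := by
        rw [intervalIntegral.integral_of_le h0]
    _ = ∫ t in (0:ℝ)..1, ∫ s in (0:ℝ)..t, FF s t := by
        apply intervalIntegral.integral_congr
        intro s _
        apply intervalIntegral.integral_congr
        intro t _
        exact FF_symm s t

lemma FF_int (a b t : ℝ) : IntervalIntegrable (fun s => FF s t) volume a b :=
  (FF_cont' t).intervalIntegrable a b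

lemma part3 :
    (∫ t in (0:ℝ)..1, ∫ s in (0:ℝ)..1, FF s t)
      = (2 + Real.sqrt 2 + 5 * Real.log (1 + Real.sqrt 2))/60 := by
  have h0 : (0:ℝ) ≤ 1 := zero_le_one
  have hPc : Continuous (fun t => ∫ s in (0:ℝ)..t, FF s t) := by
    apply intervalIntegral.continuous_parametric_intervalIntegral_of_continuous
      (f := fun t s => FF s t) ?_ continuous_id
    exact FF_cont.comp (continuous_snd.prodMk continuous_fst)
  have hR1c : Continuous (fun t => ∫ s in (0:ℝ)..1, FF s t) := by
    apply intervalIntegral.continuous_parametric_intervalIntegral_of_continuous'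
      (f := fun t s => FF s t)
    exact FF_cont.comp (continuous_snd.prodMk continuous_fst)
  have hQ : ∀ t : ℝ, (∫ s in t..(1:ℝ), FF s t)
      = (∫ s in (0:ℝ)..1, FF s t) - ∫ s in (0:ℝ)..t, FF s t := fun t =>
    (intervalIntegral.integral_interval_sub_left (FF_int 0 1 t) (FF_int 0 t t)).symm
  have hQc : Continuous (fun t => ∫ s in t..(1:ℝ), FF s t) := by
    have : (fun t => ∫ s in t..(1:ℝ), FF s t)
        = fun t => (∫ s in (0:ℝ)..1, FF s t) - ∫ s in (0:ℝ)..t, FF s t := funext hQ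
    rw [this]; exact hR1c.sub hPc
  have split : (∫ t in (0:ℝ)..1, ∫ s in (0:ℝ)..1, FF s t)
      = (∫ t in (0:ℝ)..1, ∫ s in (0:ℝ)..t, FF s t)
        + ∫ t in (0:ℝ)..1, ∫ s in t..(1:ℝ), FF s t := by
    rw [← intervalIntegral.integral_add (hPc.intervalIntegrable _ _)
      (hQc.intervalIntegrable _ _)]
    apply intervalIntegral.integral_congr
    intro t _
    exact (intervalIntegral.integral_add_adjacent_intervals (FF_int 0 t t) (FF_int t 1 t)).symm
  rw [split, tri_swap]
  set L := Real.log (1 + Real.sqrt 2) with hL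
  have heval : ∀ t ∈ uIcc (0:ℝ) 1, (∫ s in (0:ℝ)..t, FF s t)
      = (1-t)*((Real.sqrt 2 + L)/2*t^2 + (1 - 2*Real.sqrt 2)/3*t^3) := by
    intro t ht
    rw [uIcc_of_le h0] at ht
    rcases eq_or_lt_of_le ht.1 with h | h
    · rw [← h]
      simp
    · have h1 : (∫ s in (0:ℝ)..t, FF s t)
          = ∫ s in (0:ℝ)..t, (1-t) * ((1-s) * Real.sqrt (s^2 + t^2)) := by
        apply intervalIntegral.integral_congr
        intro s _
        unfold FF; ring
      rw [h1, intervalIntegral.integral_const_mul, inner_eval h]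
  rw [intervalIntegral.integral_congr heval]
  have hpoly : (fun t : ℝ => (1-t)*((Real.sqrt 2 + L)/2*t^2 + (1 - 2*Real.sqrt 2)/3*t^3))
      = fun t : ℝ => ((Real.sqrt 2 + L)/2)*t^2 + ((1 - 2*Real.sqrt 2)/3 - (Real.sqrt 2 + L)/2)*t^3
        + (-((1 - 2*Real.sqrt 2)/3))*t^4 := by
    funext t; ring
  have hi : ∀ (c : ℝ) (n : ℕ), IntervalIntegrable (fun t : ℝ => c*t^n) volume 0 1 := by
    intro c n
    exact ((continuous_const.mul (continuous_pow n)).intervalIntegrable 0 1)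
  rw [hpoly, intervalIntegral.integral_add ((hi _ 2).add (hi _ 3)) (hi _ 4),
    intervalIntegral.integral_add (hi _ 2) (hi _ 3)]
  simp only [intervalIntegral.integral_const_mul, integral_pow]
  norm_num
  ring

theorem step0 :
    ∫ p in ((Set.Icc (0:ℝ) 1 ×ˢ Set.Icc (0:ℝ) 1) ×ˢ (Set.Icc (0:ℝ) 1 ×ˢ Set.Icc (0:ℝ) 1)),
        Real.sqrt ((p.1.1 - p.2.1) ^ 2 + (p.1.2 - p.2.2) ^ 2)
      = ∫ x in Set.Icc (0:ℝ) 1, ∫ y in Set.Icc (0:ℝ) 1, ∫ u in Set.Icc (0:ℝ) 1,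
          ∫ v in Set.Icc (0:ℝ) 1, Real.sqrt ((x - u)^2 + (y - v)^2) := by
  have hScompact : IsCompact (Set.Icc (0:ℝ) 1 ×ˢ Set.Icc (0:ℝ) 1) :=
    isCompact_Icc.prod isCompact_Icc
  have hfc : Continuous (fun p : (ℝ × ℝ) × (ℝ × ℝ) =>
      Real.sqrt ((p.1.1 - p.2.1) ^ 2 + (p.1.2 - p.2.2) ^ 2)) := by fun_prop
  have hf4 : IntegrableOn (fun p : (ℝ × ℝ) × (ℝ × ℝ) =>
      Real.sqrt ((p.1.1 - p.2.1) ^ 2 + (p.1.2 - p.2.2) ^ 2))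
      ((Set.Icc (0:ℝ) 1 ×ˢ Set.Icc (0:ℝ) 1) ×ˢ (Set.Icc (0:ℝ) 1 ×ˢ Set.Icc (0:ℝ) 1))
      ((volume : Measure (ℝ×ℝ)).prod (volume : Measure (ℝ×ℝ))) :=
    hfc.continuousOn.integrableOn_compact (hScompact.prod hScompact)
  have h1 := MeasureTheory.setIntegral_prod _ hf4
  have h' : Integrable (fun p : (ℝ × ℝ) × (ℝ × ℝ) =>
      Real.sqrt ((p.1.1 - p.2.1) ^ 2 + (p.1.2 - p.2.2) ^ 2))
      ((volume.restrict (Set.Icc (0:ℝ) 1 ×ˢ Set.Icc (0:ℝ) 1)).prod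
        (volume.restrict (Set.Icc (0:ℝ) 1 ×ˢ Set.Icc (0:ℝ) 1))) := by
    rw [Measure.prod_restrict]; exact hf4
  have houter : IntegrableOn (fun z : ℝ × ℝ => ∫ w in Set.Icc (0:ℝ) 1 ×ˢ Set.Icc (0:ℝ) 1,
      Real.sqrt ((z.1 - w.1) ^ 2 + (z.2 - w.2) ^ 2)) (Set.Icc (0:ℝ) 1 ×ˢ Set.Icc (0:ℝ) 1)
      ((volume : Measure ℝ).prod (volume : Measure ℝ)) := h'.integral_prod_left
  have h2 := MeasureTheory.setIntegral_prod _ houter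
  calc ∫ p in ((Set.Icc (0:ℝ) 1 ×ˢ Set.Icc (0:ℝ) 1) ×ˢ (Set.Icc (0:ℝ) 1 ×ˢ Set.Icc (0:ℝ) 1)),
        Real.sqrt ((p.1.1 - p.2.1) ^ 2 + (p.1.2 - p.2.2) ^ 2)
      = ∫ z in Set.Icc (0:ℝ) 1 ×ˢ Set.Icc (0:ℝ) 1, ∫ w in Set.Icc (0:ℝ) 1 ×ˢ Set.Icc (0:ℝ) 1,
          Real.sqrt ((z.1 - w.1) ^ 2 + (z.2 - w.2) ^ 2) := h1
    _ = ∫ x in Set.Icc (0:ℝ) 1, ∫ y in Set.Icc (0:ℝ) 1,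
          ∫ w in Set.Icc (0:ℝ) 1 ×ˢ Set.Icc (0:ℝ) 1,
          Real.sqrt ((x - w.1) ^ 2 + (y - w.2) ^ 2) := h2
    _ = ∫ x in Set.Icc (0:ℝ) 1, ∫ y in Set.Icc (0:ℝ) 1, ∫ u in Set.Icc (0:ℝ) 1,
          ∫ v in Set.Icc (0:ℝ) 1, Real.sqrt ((x - u)^2 + (y - v)^2) := by
        apply setIntegral_congr_fun measurableSet_Icc
        intro x _
        apply setIntegral_congr_fun measurableSet_Icc
        intro y _
        have hin : IntegrableOn (fun w : ℝ × ℝ =>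
            Real.sqrt ((x - w.1) ^ 2 + (y - w.2) ^ 2))
            (Set.Icc (0:ℝ) 1 ×ˢ Set.Icc (0:ℝ) 1)
            ((volume : Measure ℝ).prod (volume : Measure ℝ)) := by
          have hc : Continuous (fun w : ℝ × ℝ =>
              Real.sqrt ((x - w.1) ^ 2 + (y - w.2) ^ 2)) := by fun_prop
          exact hc.continuousOn.integrableOn_compact hScompact
        exact MeasureTheory.setIntegral_prod _ hin

lemma part2 :
    (∫ x in Set.Icc (0:ℝ) 1, ∫ y in Set.Icc (0:ℝ) 1, ∫ u in Set.Icc (0:ℝ) 1,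
        ∫ v in Set.Icc (0:ℝ) 1, Real.sqrt ((x - u)^2 + (y - v)^2))
      = 4 * ∫ t in (0:ℝ)..1, ∫ s in (0:ℝ)..1, FF s t := by
  have h0 : (0:ℝ) ≤ 1 := zero_le_one
  have conv1 : ∀ (f : ℝ → ℝ), ∫ z in Set.Icc (0:ℝ) 1, f z = ∫ z in (0:ℝ)..1, f z := by
    intro f
    rw [MeasureTheory.integral_Icc_eq_integral_Ioc]
    exact (intervalIntegral.integral_of_le h0).symm
  simp only [conv1]
  -- swap y ↔ u
  have swap_yu : ∀ x : ℝ,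
      (∫ y in (0:ℝ)..1, ∫ u in (0:ℝ)..1, ∫ v in (0:ℝ)..1, Real.sqrt ((x-u)^2+(y-v)^2))
        = ∫ u in (0:ℝ)..1, ∫ y in (0:ℝ)..1, ∫ v in (0:ℝ)..1, Real.sqrt ((x-u)^2+(y-v)^2) := by
    intro x
    apply my_swap (fun y u => ∫ v in (0:ℝ)..1, Real.sqrt ((x-u)^2+(y-v)^2))
    apply intervalIntegral.continuous_parametric_intervalIntegral_of_continuous'
      (f := fun (p : ℝ × ℝ) v => Real.sqrt ((x-p.2)^2+(p.1-v)^2))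
    fun_prop
  rw [intervalIntegral.integral_congr (fun x _ => swap_yu x)]
  -- L1 on (y, v)
  have l1a : ∀ x u : ℝ,
      (∫ y in (0:ℝ)..1, ∫ v in (0:ℝ)..1, Real.sqrt ((x-u)^2+(y-v)^2))
        = ∫ t in (0:ℝ)..1, (2*(1-t)) * Real.sqrt ((x-u)^2+t^2) := by
    intro x u
    have he : ∀ s : ℝ, Real.sqrt ((x-u)^2+(-s)^2) = Real.sqrt ((x-u)^2+s^2) := by
      intro s; rw [neg_sq]
    have := L1 (fun b => Real.sqrt ((x-u)^2+b^2)) (by fun_prop) he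
    rw [this, ← intervalIntegral.integral_const_mul]
    apply intervalIntegral.integral_congr
    intro t _
    ring
  rw [intervalIntegral.integral_congr (fun x _ =>
    intervalIntegral.integral_congr (fun u _ => l1a x u))]
  -- swap u ↔ t
  have swap_ut : ∀ x : ℝ,
      (∫ u in (0:ℝ)..1, ∫ t in (0:ℝ)..1, (2*(1-t)) * Real.sqrt ((x-u)^2+t^2))
        = ∫ t in (0:ℝ)..1, ∫ u in (0:ℝ)..1, (2*(1-t)) * Real.sqrt ((x-u)^2+t^2) := by
    intro x
    apply my_swap (fun u t => (2*(1-t)) * Real.sqrt ((x-u)^2+t^2))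
    unfold Function.uncurry
    fun_prop
  rw [intervalIntegral.integral_congr (fun x _ => swap_ut x)]
  -- swap x ↔ t
  have swap_xt :
      (∫ x in (0:ℝ)..1, ∫ t in (0:ℝ)..1, ∫ u in (0:ℝ)..1,
          (2*(1-t)) * Real.sqrt ((x-u)^2+t^2))
        = ∫ t in (0:ℝ)..1, ∫ x in (0:ℝ)..1, ∫ u in (0:ℝ)..1,
          (2*(1-t)) * Real.sqrt ((x-u)^2+t^2) := by
    apply my_swap (fun x t => ∫ u in (0:ℝ)..1, (2*(1-t)) * Real.sqrt ((x-u)^2+t^2))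
    apply intervalIntegral.continuous_parametric_intervalIntegral_of_continuous'
      (f := fun (p : ℝ × ℝ) u => (2*(1-p.2)) * Real.sqrt ((p.1-u)^2+p.2^2))
    fun_prop
  rw [swap_xt]
  -- pull constants and apply L1 per t
  have final : ∀ t : ℝ,
      (∫ x in (0:ℝ)..1, ∫ u in (0:ℝ)..1, (2*(1-t)) * Real.sqrt ((x-u)^2+t^2))
        = 4 * ∫ s in (0:ℝ)..1, FF s t := by
    intro t
    have pull : (∫ x in (0:ℝ)..1, ∫ u in (0:ℝ)..1, (2*(1-t)) * Real.sqrt ((x-u)^2+t^2))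
        = (2*(1-t)) * ∫ x in (0:ℝ)..1, ∫ u in (0:ℝ)..1, Real.sqrt ((x-u)^2+t^2) := by
      rw [← intervalIntegral.integral_const_mul]
      apply intervalIntegral.integral_congr
      intro x _
      exact intervalIntegral.integral_const_mul _ _
    rw [pull]
    have he : ∀ s : ℝ, Real.sqrt ((-s)^2+t^2) = Real.sqrt (s^2+t^2) := by
      intro s; rw [neg_sq]
    have hl1 := L1 (fun s => Real.sqrt (s^2+t^2)) (by fun_prop) he
    have inner_eq : (∫ s in (0:ℝ)..1, FF s t)
        = (1-t) * ∫ s in (0:ℝ)..1, (1-s) * Real.sqrt (s^2+t^2) := by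
      rw [← intervalIntegral.integral_const_mul]
      apply intervalIntegral.integral_congr
      intro s _
      unfold FF
      ring
    rw [hl1, inner_eq]
    ring
  rw [intervalIntegral.integral_congr (fun t _ => final t), intervalIntegral.integral_const_mul]

end EuclideanDistanceAux

/-- The integral of the Euclidean distance between two points of the unit square,
taken over `([0,1]²) × ([0,1]²)` with respect to 4-dimensional Lebesgue measure,
equals `(2 + √2 + 5·ln(1 + √2))/15 ≈ 0.52`. -/
theorem stmt_1 :
    ∫ p in ((Set.Icc (0:ℝ) 1 ×ˢ Set.Icc (0:ℝ) 1) ×ˢ (Set.Icc (0:ℝ) 1 ×ˢ Set.Icc (0:ℝ) 1)),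
        Real.sqrt ((p.1.1 - p.2.1) ^ 2 + (p.1.2 - p.2.2) ^ 2)
      = (2 + Real.sqrt 2 + 5 * Real.log (1 + Real.sqrt 2)) / 15 := by
  rw [step0, part2, part3]
  ring
end

section
/- For every real l with 0 ≤ l ≤ 1, the 4-dimensional Lebesgue measure of the set {((x₁,y₁),(x₂,y₂)) ∈ [0,1]⁴ : (x₁−x₂)² + (y₁−y₂)² ≤ l²} equals π·l² − (8/3)·l³ + l⁴/2. (Equivalently, the cumulative distribution function of the distance between two independent uniform points of the unit square is π·l² − (8/3)·l³ + l⁴/2 on [0,1], whose derivative is the Ghosh density 2πl − 8l² + 2l³.) -/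
open MeasureTheory Real

open scoped ENNReal

/-- Indicator of the unit interval, as an `ℝ≥0∞`-valued function. -/
noncomputable def Jind : ℝ → ℝ≥0∞ := (Set.Icc (0:ℝ) 1).indicator 1

lemma Jind_meas : Measurable Jind := measurable_one.indicator measurableSet_Icc

lemma Jind_mul (u : ℝ) : ∫⁻ a : ℝ, Jind a * Jind (a - u) = ENNReal.ofReal (1 - |u|) := by
  have h1 : ∀ a : ℝ, Jind a * Jind (a - u)
      = (Set.Icc (max 0 u) (min 1 (1 + u))).indicator 1 a := by
    intro a
    have key : a ∈ Set.Icc (max 0 u) (min 1 (1 + u)) ↔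
        a ∈ Set.Icc (0:ℝ) 1 ∧ a - u ∈ Set.Icc (0:ℝ) 1 := by
      simp only [Set.mem_Icc, max_le_iff, le_min_iff, sub_nonneg, sub_le_iff_le_add]
      constructor
      · rintro ⟨⟨h1, h2⟩, h3, h4⟩; exact ⟨⟨h1, h3⟩, h2, by linarith⟩
      · rintro ⟨⟨h1, h2⟩, h3, h4⟩; exact ⟨⟨h1, h3⟩, h2, by linarith⟩
    by_cases ha : a ∈ Set.Icc (0:ℝ) 1 <;> by_cases hb : a - u ∈ Set.Icc (0:ℝ) 1 <;>
      simp [Jind, Set.indicator_apply, key, ha, hb]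
  simp_rw [h1]
  rw [lintegral_indicator_one measurableSet_Icc, Real.volume_Icc]
  rcases le_total 0 u with h | h
  · rw [max_eq_right h, min_eq_left (by linarith), abs_of_nonneg h]
  · rw [max_eq_left h, min_eq_right (by linarith), abs_of_nonpos h]
    norm_num

lemma strip (f : ℝ → ℝ≥0∞) (hf : Measurable f) :
    (∫⁻ a : ℝ, ∫⁻ b : ℝ, Jind a * Jind b * f (a - b))
      = ∫⁻ u : ℝ, f u * ENNReal.ofReal (1 - |u|) := by
  have h1 : ∀ a : ℝ, (∫⁻ b : ℝ, Jind a * Jind b * f (a - b))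
      = ∫⁻ u : ℝ, Jind a * Jind (a - u) * f u := by
    intro a
    have hmp : MeasurePreserving (fun x : ℝ => a - x) volume volume :=
      Measure.measurePreserving_sub_left volume a
    have hm : Measurable fun u : ℝ => Jind a * Jind (a - u) * f u :=
      (measurable_const.mul (Jind_meas.comp (measurable_const.sub measurable_id))).mul hf
    have hcomp := hmp.lintegral_comp hm
    rw [← hcomp]
    simp only [sub_sub_cancel]
  simp_rw [h1]
  have hmeas : Measurable (Function.uncurry fun a u : ℝ => Jind a * Jind (a - u) * f u) :=
    ((Jind_meas.comp measurable_fst).mul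
      (Jind_meas.comp (measurable_fst.sub measurable_snd))).mul (hf.comp measurable_snd)
  rw [lintegral_lintegral_swap hmeas.aemeasurable]
  refine lintegral_congr fun u => ?_
  calc (∫⁻ a : ℝ, Jind a * Jind (a - u) * f u)
      = ∫⁻ a : ℝ, f u * (Jind a * Jind (a - u)) := by
        refine lintegral_congr fun a => ?_; ring
    _ = f u * ∫⁻ a : ℝ, Jind a * Jind (a - u) :=
        lintegral_const_mul _ (Jind_meas.mul (Jind_meas.comp (measurable_id.sub measurable_const)))
    _ = f u * ENNReal.ofReal (1 - |u|) := by rw [Jind_mul]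

lemma quad (F : ℝ → ℝ → ℝ → ℝ → ℝ≥0∞)
    (hF : Measurable fun p : (ℝ × ℝ) × ℝ × ℝ => F p.1.1 p.1.2 p.2.1 p.2.2) :
    (∫⁻ p : (ℝ × ℝ) × ℝ × ℝ, F p.1.1 p.1.2 p.2.1 p.2.2)
      = ∫⁻ x₁ : ℝ, ∫⁻ y₁ : ℝ, ∫⁻ x₂ : ℝ, ∫⁻ y₂ : ℝ, F x₁ y₁ x₂ y₂ := by
  have hg : Measurable fun q : ((ℝ × ℝ) × ℝ) × ℝ => ((q.1.1.1, q.1.1.2), (q.1.2, q.2)) := by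
    fun_prop
  have m2 : Measurable fun q : ((ℝ × ℝ) × ℝ) × ℝ => F q.1.1.1 q.1.1.2 q.1.2 q.2 :=
    hF.comp hg
  have m1 : Measurable fun q : (ℝ × ℝ) × ℝ => ∫⁻ y₂ : ℝ, F q.1.1 q.1.2 q.2 y₂ :=
    m2.lintegral_prod_right'
  have hG : Measurable fun x : ℝ × ℝ => ∫⁻ x₂ : ℝ, ∫⁻ y₂ : ℝ, F x.1 x.2 x₂ y₂ :=
    m1.lintegral_prod_right'
  calc (∫⁻ p : (ℝ × ℝ) × ℝ × ℝ, F p.1.1 p.1.2 p.2.1 p.2.2)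
      = ∫⁻ x : ℝ × ℝ, ∫⁻ y : ℝ × ℝ, F x.1 x.2 y.1 y.2 := by
        rw [Measure.volume_eq_prod, lintegral_prod _ hF.aemeasurable]
    _ = ∫⁻ x : ℝ × ℝ, ∫⁻ x₂ : ℝ, ∫⁻ y₂ : ℝ, F x.1 x.2 x₂ y₂ := by
        refine lintegral_congr fun x => ?_
        have hx : Measurable fun y : ℝ × ℝ => F x.1 x.2 y.1 y.2 :=
          hF.comp measurable_prodMk_left
        rw [Measure.volume_eq_prod,
          lintegral_prod (fun y : ℝ × ℝ => F x.1 x.2 y.1 y.2) hx.aemeasurable]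
    _ = ∫⁻ x₁ : ℝ, ∫⁻ y₁ : ℝ, ∫⁻ x₂ : ℝ, ∫⁻ y₂ : ℝ, F x₁ y₁ x₂ y₂ := by
        rw [Measure.volume_eq_prod, lintegral_prod _ hG.aemeasurable]

/-- Indicator of the disk condition. -/
noncomputable def Cind (l u v : ℝ) : ℝ≥0∞ := if u ^ 2 + v ^ 2 ≤ l ^ 2 then 1 else 0

lemma Cind_meas (l : ℝ) : Measurable fun p : ℝ × ℝ => Cind l p.1 p.2 := by
  unfold Cind
  exact Measurable.ite (measurableSet_le (by fun_prop) measurable_const)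
    measurable_const measurable_const

noncomputable def phi (l u : ℝ) : ℝ :=
  if u ^ 2 ≤ l ^ 2 then 2 * Real.sqrt (l ^ 2 - u ^ 2) - (l ^ 2 - u ^ 2) else 0

lemma tri (s : ℝ) (hs0 : 0 ≤ s) :
    (∫ v in (-s)..s, (1 - |v|)) = 2 * s - s ^ 2 := by
  have hi : ∀ a b : ℝ, IntervalIntegrable (fun v : ℝ => 1 - |v|) volume a b :=
    fun a b => (continuous_const.sub continuous_abs).intervalIntegrable a b
  have i1 : (∫ v in (-s)..(0:ℝ), (1 - |v|)) = ∫ v in (-s)..(0:ℝ), (1 + v) := by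
    refine intervalIntegral.integral_congr fun v hv => ?_
    rw [Set.uIcc_of_le (by linarith)] at hv
    rw [abs_of_nonpos hv.2]; ring
  have i2 : (∫ v in (0:ℝ)..s, (1 - |v|)) = ∫ v in (0:ℝ)..s, (1 - v) := by
    refine intervalIntegral.integral_congr fun v hv => ?_
    rw [Set.uIcc_of_le hs0] at hv
    rw [abs_of_nonneg hv.1]
  rw [← intervalIntegral.integral_add_adjacent_intervals (hi (-s) 0) (hi 0 s), i1, i2]
  have p1 : (∫ v in (-s)..(0:ℝ), (1 + v)) = s - s ^ 2 / 2 := by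
    rw [intervalIntegral.integral_add (intervalIntegrable_const) intervalIntegral.intervalIntegrable_id]
    simp [integral_id]
    all_goals ring
  have p2 : (∫ v in (0:ℝ)..s, (1 - v)) = s - s ^ 2 / 2 := by
    rw [intervalIntegral.integral_sub (intervalIntegrable_const) intervalIntegral.intervalIntegrable_id]
    simp [integral_id]
    all_goals ring
  rw [p1, p2]; ring

lemma phi_nonneg (l : ℝ) (h0 : 0 ≤ l) (h1 : l ≤ 1) (u : ℝ) : 0 ≤ phi l u := by
  unfold phi
  split_ifs with hu
  · have hc : 0 ≤ l ^ 2 - u ^ 2 := by linarith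
    have hs0 : 0 ≤ Real.sqrt (l ^ 2 - u ^ 2) := Real.sqrt_nonneg _
    have hssq : Real.sqrt (l ^ 2 - u ^ 2) ^ 2 = l ^ 2 - u ^ 2 := Real.sq_sqrt hc
    have hs1 : Real.sqrt (l ^ 2 - u ^ 2) ≤ 1 := by
      nlinarith [sq_nonneg u]
    nlinarith
  · exact le_refl 0

lemma inner_val (l : ℝ) (h0 : 0 ≤ l) (h1 : l ≤ 1) (u : ℝ) :
    (∫⁻ v : ℝ, Cind l u v * ENNReal.ofReal (1 - |v|)) = ENNReal.ofReal (phi l u) := by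
  by_cases hu : u ^ 2 ≤ l ^ 2
  · have hc : 0 ≤ l ^ 2 - u ^ 2 := by linarith
    set s := Real.sqrt (l ^ 2 - u ^ 2) with hs
    have hs0 : 0 ≤ s := Real.sqrt_nonneg _
    have hssq : s ^ 2 = l ^ 2 - u ^ 2 := Real.sq_sqrt hc
    have hs1 : s ≤ 1 := by nlinarith [sq_nonneg u]
    have hCind : ∀ v : ℝ, Cind l u v = (Set.Icc (-s) s).indicator (fun _ => (1:ℝ≥0∞)) v := by
      intro v
      have hiff : u ^ 2 + v ^ 2 ≤ l ^ 2 ↔ v ∈ Set.Icc (-s) s := by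
        rw [Set.mem_Icc, ← abs_le]
        constructor
        · intro h
          have hv2 : Real.sqrt (v ^ 2) ≤ Real.sqrt (s ^ 2) := by
            apply Real.sqrt_le_sqrt; nlinarith
          rwa [Real.sqrt_sq_eq_abs, Real.sqrt_sq hs0] at hv2
        · intro h
          nlinarith [sq_abs v, abs_nonneg v]
      simp [Cind, Set.indicator_apply, hiff]
    simp_rw [hCind]
    have hmul : ∀ v : ℝ, (Set.Icc (-s) s).indicator (fun _ => (1:ℝ≥0∞)) v
        * ENNReal.ofReal (1 - |v|)
        = (Set.Icc (-s) s).indicator (fun v => ENNReal.ofReal (1 - |v|)) v := by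
      intro v
      rw [Set.indicator_apply, Set.indicator_apply]
      split_ifs <;> simp
    simp_rw [hmul]
    rw [lintegral_indicator measurableSet_Icc]
    rw [← ofReal_integral_eq_lintegral_ofReal]
    · have : (∫ v in Set.Icc (-s) s, (1 - |v|)) = ∫ v in (-s)..s, (1 - |v|) := by
        rw [MeasureTheory.integral_Icc_eq_integral_Ioc,
          ← intervalIntegral.integral_of_le (by linarith)]
      rw [this, tri s hs0]
      unfold phi
      rw [if_pos hu, ← hs, ← hssq]
      all_goals ring_nf
    · exact (continuous_const.sub continuous_abs).integrableOn_Icc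
    · refine (ae_restrict_iff' measurableSet_Icc).2 (ae_of_all _ fun v hv => ?_)
      rw [Set.mem_Icc] at hv
      have : |v| ≤ s := abs_le.2 hv
      simp only [Pi.zero_apply]
      linarith
  · have hz : ∀ v : ℝ, Cind l u v = 0 := by
      intro v; unfold Cind; rw [if_neg]; intro h; apply hu; nlinarith [sq_nonneg v]
    simp only [hz, zero_mul, lintegral_zero]
    unfold phi
    rw [if_neg hu, ENNReal.ofReal_zero]


lemma sqrt_cont (l : ℝ) : Continuous fun u : ℝ => Real.sqrt (l ^ 2 - u ^ 2) :=
  Real.continuous_sqrt.comp (continuous_const.sub (continuous_pow 2))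

lemma hA (l : ℝ) (h0 : 0 ≤ l) :
    (∫ u in (0:ℝ)..l, Real.sqrt (l ^ 2 - u ^ 2)) = π * l ^ 2 / 4 := by
  rcases eq_or_lt_of_le h0 with rfl | hl
  · simp
  · have hic : ∀ a b : ℝ, IntervalIntegrable (fun x : ℝ => Real.sqrt (1 - x ^ 2)) volume a b :=
      fun a b => (Real.continuous_sqrt.comp (continuous_const.sub (continuous_pow 2))).intervalIntegrable a b
    have hhalf : (∫ x in (0:ℝ)..1, Real.sqrt (1 - x ^ 2)) = π / 4 := by
      have full := integral_sqrt_one_sub_sq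
      have heq : (∫ x in (-1:ℝ)..0, Real.sqrt (1 - x ^ 2))
          = ∫ x in (0:ℝ)..1, Real.sqrt (1 - x ^ 2) := by
        have h2 := intervalIntegral.integral_comp_neg (a := (0:ℝ)) (b := 1)
          (fun x => Real.sqrt (1 - x ^ 2))
        simp only [neg_zero, neg_sq] at h2
        exact h2.symm
      have hadd := intervalIntegral.integral_add_adjacent_intervals
        (hic (-1) 0) (hic 0 1)
      rw [full, heq] at hadd
      linarith
    have hsub := intervalIntegral.integral_comp_mul_left (a := (0:ℝ)) (b := 1)
      (fun u => Real.sqrt (l ^ 2 - u ^ 2)) (ne_of_gt hl)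
    simp only [mul_zero, mul_one, smul_eq_mul] at hsub
    have hrw : ∀ x : ℝ, Real.sqrt (l ^ 2 - (l * x) ^ 2) = l * Real.sqrt (1 - x ^ 2) := by
      intro x
      rw [show l ^ 2 - (l * x) ^ 2 = l ^ 2 * (1 - x ^ 2) by ring,
        Real.sqrt_mul (sq_nonneg l), Real.sqrt_sq h0]
    simp only [hrw] at hsub
    rw [intervalIntegral.integral_const_mul, hhalf] at hsub
    field_simp at hsub
    linarith [hsub]

lemma hB (l : ℝ) (h0 : 0 ≤ l) :
    (∫ u in (0:ℝ)..l, u * Real.sqrt (l ^ 2 - u ^ 2)) = l ^ 3 / 3 := by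
  have hder : ∀ u ∈ Set.uIcc (0:ℝ) l,
      HasDerivAt (fun u : ℝ => -(1/3) * (l ^ 2 - u ^ 2) ^ ((3:ℝ)/2))
        (u * Real.sqrt (l ^ 2 - u ^ 2)) u := by
    intro u hu
    have hinner : HasDerivAt (fun u : ℝ => l ^ 2 - u ^ 2) (-(2 * u)) u := by
      simpa using (hasDerivAt_pow 2 u).const_sub (l ^ 2)
    have hr := hinner.rpow_const (p := (3:ℝ)/2) (Or.inr (by norm_num))
    have hm := hr.const_mul (-(1/3) : ℝ)
    refine hm.congr_deriv ?_
    rw [show (3:ℝ)/2 - 1 = 1/2 by norm_num]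
    rw [Real.sqrt_eq_rpow, show (1:ℝ)/2 = 2⁻¹ by norm_num]
    ring
  rw [intervalIntegral.integral_eq_sub_of_hasDerivAt hder
    ((continuous_id.mul (sqrt_cont l)).intervalIntegrable 0 l)]
  have h1 : ((l:ℝ) ^ 2 - l ^ 2) = 0 := by ring
  have h2 : ((l:ℝ) ^ 2 - 0 ^ 2) ^ ((3:ℝ)/2) = l ^ 3 := by
    rw [show (l:ℝ) ^ 2 - 0 ^ 2 = l ^ 2 by ring]
    rw [← Real.rpow_natCast l 2, ← Real.rpow_mul h0]
    rw [show ((2:ℕ):ℝ) * ((3:ℝ)/2) = ((3:ℕ):ℝ) by push_cast; ring]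
    rw [Real.rpow_natCast]
  rw [h1, Real.zero_rpow (by norm_num), h2]
  ring

lemma hP (l : ℝ) :
    (∫ u in (0:ℝ)..l, (l ^ 2 - u ^ 2) * (1 - u)) = 2/3 * l ^ 3 - l ^ 4 / 4 := by
  have hder : ∀ u ∈ Set.uIcc (0:ℝ) l,
      HasDerivAt (fun u : ℝ => l ^ 2 * u - l ^ 2 * u ^ 2 / 2 - u ^ 3 / 3 + u ^ 4 / 4)
        ((l ^ 2 - u ^ 2) * (1 - u)) u := by
    intro u _
    have h1 : HasDerivAt (fun u : ℝ => l ^ 2 * u - l ^ 2 * u ^ 2 / 2 - u ^ 3 / 3 + u ^ 4 / 4)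
        (l ^ 2 * 1 - l ^ 2 * (↑2 * u ^ 1) / 2 - (↑3 * u ^ 2) / 3 + (↑4 * u ^ 3) / 4) u := by
      exact ((((hasDerivAt_id u).const_mul (l ^ 2)).sub
        (((hasDerivAt_pow 2 u).const_mul (l ^ 2)).div_const 2)).sub
        ((hasDerivAt_pow 3 u).div_const 3)).add ((hasDerivAt_pow 4 u).div_const 4)
    convert h1 using 1
    push_cast
    ring
  rw [intervalIntegral.integral_eq_sub_of_hasDerivAt hder
    (((continuous_const.sub (continuous_pow 2)).mul
      (continuous_const.sub continuous_id)).intervalIntegrable 0 l)]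
  ring

lemma Kval (l : ℝ) (h0 : 0 ≤ l) (h1 : l ≤ 1) :
    (∫ u in (-l)..l, (2 * Real.sqrt (l ^ 2 - u ^ 2) - (l ^ 2 - u ^ 2)) * (1 - |u|))
      = π * l ^ 2 - (8 / 3) * l ^ 3 + l ^ 4 / 2 := by
  have hcont : Continuous fun u : ℝ => (2 * Real.sqrt (l ^ 2 - u ^ 2) - (l ^ 2 - u ^ 2)) * (1 - |u|) :=
    ((continuous_const.mul (sqrt_cont l)).sub
      (continuous_const.sub (continuous_pow 2))).mul (continuous_const.sub continuous_abs)
  rw [← intervalIntegral.integral_add_adjacent_intervals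
    (hcont.intervalIntegrable (-l) 0) (hcont.intervalIntegrable 0 l)]
  have e2 : (∫ u in (0:ℝ)..l, (2 * Real.sqrt (l ^ 2 - u ^ 2) - (l ^ 2 - u ^ 2)) * (1 - |u|))
      = ∫ u in (0:ℝ)..l, (2 * Real.sqrt (l ^ 2 - u ^ 2) - (l ^ 2 - u ^ 2)) * (1 - u) := by
    refine intervalIntegral.integral_congr fun u hu => ?_
    rw [Set.uIcc_of_le h0] at hu
    rw [abs_of_nonneg hu.1]
  have e1 : (∫ u in (-l)..(0:ℝ), (2 * Real.sqrt (l ^ 2 - u ^ 2) - (l ^ 2 - u ^ 2)) * (1 - |u|))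
      = ∫ u in (0:ℝ)..l, (2 * Real.sqrt (l ^ 2 - u ^ 2) - (l ^ 2 - u ^ 2)) * (1 - u) := by
    have h2 := intervalIntegral.integral_comp_neg (a := (0:ℝ)) (b := l)
      (fun u => (2 * Real.sqrt (l ^ 2 - u ^ 2) - (l ^ 2 - u ^ 2)) * (1 - |u|))
    simp only [neg_zero, neg_sq, abs_neg] at h2
    rw [← h2]
    refine intervalIntegral.integral_congr fun u hu => ?_
    rw [Set.uIcc_of_le h0] at hu
    rw [abs_of_nonneg hu.1]
  rw [e1, e2]
  have expand : (∫ u in (0:ℝ)..l, (2 * Real.sqrt (l ^ 2 - u ^ 2) - (l ^ 2 - u ^ 2)) * (1 - u))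
      = (∫ u in (0:ℝ)..l, 2 * Real.sqrt (l ^ 2 - u ^ 2))
        - (∫ u in (0:ℝ)..l, 2 * (u * Real.sqrt (l ^ 2 - u ^ 2)))
        - ∫ u in (0:ℝ)..l, (l ^ 2 - u ^ 2) * (1 - u) := by
    rw [← intervalIntegral.integral_sub, ← intervalIntegral.integral_sub]
    · exact intervalIntegral.integral_congr fun u hu => by ring
    · exact ((continuous_const.mul (sqrt_cont l)).sub
        (continuous_const.mul (continuous_id.mul (sqrt_cont l)))).intervalIntegrable 0 l
    · exact ((continuous_const.sub (continuous_pow 2)).mul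
        (continuous_const.sub continuous_id)).intervalIntegrable 0 l
    · exact (continuous_const.mul (sqrt_cont l)).intervalIntegrable 0 l
    · exact (continuous_const.mul (continuous_id.mul (sqrt_cont l))).intervalIntegrable 0 l
  rw [expand, intervalIntegral.integral_const_mul, intervalIntegral.integral_const_mul,
    hA l h0, hB l h0, hP l]
  ring


/-- For `0 ≤ l ≤ 1`, the 4-dimensional Lebesgue measure of the set of pairs of points
of the unit square at Euclidean distance at most `l` equals `π·l² − (8/3)·l³ + l⁴/2`. -/
theorem stmt_2 (l : ℝ) (h0 : 0 ≤ l) (h1 : l ≤ 1) :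
    volume (((Set.Icc (0:ℝ) 1 ×ˢ Set.Icc (0:ℝ) 1) ×ˢ (Set.Icc (0:ℝ) 1 ×ˢ Set.Icc (0:ℝ) 1)) ∩
        {p : (ℝ × ℝ) × ℝ × ℝ | (p.1.1 - p.2.1) ^ 2 + (p.1.2 - p.2.2) ^ 2 ≤ l ^ 2})
      = ENNReal.ofReal (π * l ^ 2 - (8 / 3) * l ^ 3 + l ^ 4 / 2) := by
  classical
  have hScond : MeasurableSet {p : (ℝ × ℝ) × ℝ × ℝ |
      (p.1.1 - p.2.1) ^ 2 + (p.1.2 - p.2.2) ^ 2 ≤ l ^ 2} :=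
    measurableSet_le (by fun_prop) measurable_const
  have hS : MeasurableSet (((Set.Icc (0:ℝ) 1 ×ˢ Set.Icc (0:ℝ) 1) ×ˢ
      (Set.Icc (0:ℝ) 1 ×ˢ Set.Icc (0:ℝ) 1)) ∩
      {p : (ℝ × ℝ) × ℝ × ℝ | (p.1.1 - p.2.1) ^ 2 + (p.1.2 - p.2.2) ^ 2 ≤ l ^ 2}) :=
    ((measurableSet_Icc.prod measurableSet_Icc).prod
      (measurableSet_Icc.prod measurableSet_Icc)).inter hScond
  rw [← lintegral_indicator_one hS]
  have hdecomp : ∀ p : (ℝ × ℝ) × ℝ × ℝ,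
      (((Set.Icc (0:ℝ) 1 ×ˢ Set.Icc (0:ℝ) 1) ×ˢ (Set.Icc (0:ℝ) 1 ×ˢ Set.Icc (0:ℝ) 1)) ∩
        {p : (ℝ × ℝ) × ℝ × ℝ | (p.1.1 - p.2.1) ^ 2 + (p.1.2 - p.2.2) ^ 2 ≤ l ^ 2}).indicator
          (1 : ((ℝ × ℝ) × ℝ × ℝ) → ℝ≥0∞) p
      = Jind p.1.1 * Jind p.1.2 * Jind p.2.1 * Jind p.2.2
          * Cind l (p.1.1 - p.2.1) (p.1.2 - p.2.2) := by
    rintro ⟨⟨x₁, y₁⟩, x₂, y₂⟩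
    simp only [Set.indicator_apply, Set.mem_inter_iff, Set.mem_prod, Set.mem_setOf_eq,
      Pi.one_apply, Jind, Cind]
    by_cases h1 : x₁ ∈ Set.Icc (0:ℝ) 1 <;> by_cases h2 : y₁ ∈ Set.Icc (0:ℝ) 1 <;>
      by_cases h3 : x₂ ∈ Set.Icc (0:ℝ) 1 <;> by_cases h4 : y₂ ∈ Set.Icc (0:ℝ) 1 <;>
      by_cases h5 : (x₁ - x₂) ^ 2 + (y₁ - y₂) ^ 2 ≤ l ^ 2 <;>
      simp [Set.indicator_apply, h1, h2, h3, h4, h5]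
  simp only [hdecomp]
  -- measurability facts
  have mJ1 : Measurable fun p : (ℝ × ℝ) × ℝ × ℝ => Jind p.1.1 :=
    Jind_meas.comp (measurable_fst.fst)
  have mJ2 : Measurable fun p : (ℝ × ℝ) × ℝ × ℝ => Jind p.1.2 :=
    Jind_meas.comp (measurable_fst.snd)
  have mJ3 : Measurable fun p : (ℝ × ℝ) × ℝ × ℝ => Jind p.2.1 :=
    Jind_meas.comp (measurable_snd.fst)
  have mJ4 : Measurable fun p : (ℝ × ℝ) × ℝ × ℝ => Jind p.2.2 :=
    Jind_meas.comp (measurable_snd.snd)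
  have mC : Measurable fun p : (ℝ × ℝ) × ℝ × ℝ => Cind l (p.1.1 - p.2.1) (p.1.2 - p.2.2) :=
    (Cind_meas l).comp ((measurable_fst.fst.sub measurable_snd.fst).prodMk
      (measurable_fst.snd.sub measurable_snd.snd))
  have hbig : Measurable fun p : (ℝ × ℝ) × ℝ × ℝ =>
      Jind p.1.1 * Jind p.1.2 * Jind p.2.1 * Jind p.2.2
        * Cind l (p.1.1 - p.2.1) (p.1.2 - p.2.2) :=
    (((mJ1.mul mJ2).mul mJ3).mul mJ4).mul mC
  have big : (∫⁻ p : (ℝ × ℝ) × ℝ × ℝ, Jind p.1.1 * Jind p.1.2 * Jind p.2.1 * Jind p.2.2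
        * Cind l (p.1.1 - p.2.1) (p.1.2 - p.2.2))
      = ∫⁻ x₁ : ℝ, ∫⁻ y₁ : ℝ, ∫⁻ x₂ : ℝ, ∫⁻ y₂ : ℝ,
          Jind x₁ * Jind y₁ * Jind x₂ * Jind y₂ * Cind l (x₁ - x₂) (y₁ - y₂) :=
    quad (fun x₁ y₁ x₂ y₂ => Jind x₁ * Jind y₁ * Jind x₂ * Jind y₂ * Cind l (x₁ - x₂) (y₁ - y₂))
      hbig
  rw [big]
  have mof : Measurable fun v : ℝ => ENNReal.ofReal (1 - |v|) :=
    ENNReal.measurable_ofReal.comp (measurable_const.sub measurable_abs)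
  have mCv : ∀ u : ℝ, Measurable fun v : ℝ => Cind l u v := fun u =>
    (Cind_meas l).comp (measurable_const.prodMk measurable_id)
  have mphi : Measurable fun u : ℝ => ENNReal.ofReal (phi l u) := by
    apply ENNReal.measurable_ofReal.comp
    unfold phi
    exact Measurable.ite (measurableSet_le (by fun_prop) measurable_const)
      ((measurable_const.mul ((Real.continuous_sqrt.measurable).comp
        (measurable_const.sub (measurable_id.pow_const 2)))).sub
        (measurable_const.sub (measurable_id.pow_const 2)))
      measurable_const
  -- swap middle integrals
  have hswap : ∀ x₁ : ℝ,
      (∫⁻ y₁ : ℝ, ∫⁻ x₂ : ℝ, ∫⁻ y₂ : ℝ,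
        Jind x₁ * Jind y₁ * Jind x₂ * Jind y₂ * Cind l (x₁ - x₂) (y₁ - y₂))
      = ∫⁻ x₂ : ℝ, ∫⁻ y₁ : ℝ, ∫⁻ y₂ : ℝ,
        Jind x₁ * Jind y₁ * Jind x₂ * Jind y₂ * Cind l (x₁ - x₂) (y₁ - y₂) := by
    intro x₁
    have mr : Measurable fun r : (ℝ × ℝ) × ℝ =>
        Jind x₁ * Jind r.1.1 * Jind r.1.2 * Jind r.2
          * Cind l (x₁ - r.1.2) (r.1.1 - r.2) :=
      ((((measurable_const.mul (Jind_meas.comp measurable_fst.fst)).mul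
        (Jind_meas.comp measurable_fst.snd)).mul
        (Jind_meas.comp measurable_snd)).mul
        ((Cind_meas l).comp ((measurable_const.sub measurable_fst.snd).prodMk
          (measurable_fst.fst.sub measurable_snd))))
    exact lintegral_lintegral_swap (mr.lintegral_prod_right').aemeasurable
  have step23 : ∀ x₁ x₂ : ℝ,
      (∫⁻ y₁ : ℝ, ∫⁻ y₂ : ℝ,
        Jind x₁ * Jind y₁ * Jind x₂ * Jind y₂ * Cind l (x₁ - x₂) (y₁ - y₂))
      = Jind x₁ * Jind x₂ * ENNReal.ofReal (phi l (x₁ - x₂)) := by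
    intro x₁ x₂
    have hinmeas : ∀ y₁ : ℝ, Measurable fun y₂ : ℝ =>
        Jind y₁ * Jind y₂ * Cind l (x₁ - x₂) (y₁ - y₂) := fun y₁ =>
      ((measurable_const.mul Jind_meas).mul
        ((mCv (x₁ - x₂)).comp (measurable_const.sub measurable_id)))
    have e1 : ∀ y₁ : ℝ,
        (∫⁻ y₂ : ℝ, Jind x₁ * Jind y₁ * Jind x₂ * Jind y₂ * Cind l (x₁ - x₂) (y₁ - y₂))
        = Jind x₁ * Jind x₂
            * ∫⁻ y₂ : ℝ, Jind y₁ * Jind y₂ * Cind l (x₁ - x₂) (y₁ - y₂) := by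
      intro y₁
      rw [← lintegral_const_mul _ (hinmeas y₁)]
      refine lintegral_congr fun y₂ => ?_
      ring
    simp only [e1]
    have hmid : Measurable fun y₁ : ℝ =>
        ∫⁻ y₂ : ℝ, Jind y₁ * Jind y₂ * Cind l (x₁ - x₂) (y₁ - y₂) := by
      apply Measurable.lintegral_prod_right'
        (f := fun q : ℝ × ℝ => Jind q.1 * Jind q.2 * Cind l (x₁ - x₂) (q.1 - q.2))
      exact ((Jind_meas.comp measurable_fst).mul (Jind_meas.comp measurable_snd)).mul
        ((mCv (x₁ - x₂)).comp (measurable_fst.sub measurable_snd))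
    rw [lintegral_const_mul _ hmid]
    have hstrip1 : (∫⁻ y₁ : ℝ, ∫⁻ y₂ : ℝ, Jind y₁ * Jind y₂ * Cind l (x₁ - x₂) (y₁ - y₂))
        = ∫⁻ v : ℝ, Cind l (x₁ - x₂) v * ENNReal.ofReal (1 - |v|) :=
      strip (fun v => Cind l (x₁ - x₂) v) (mCv (x₁ - x₂))
    rw [hstrip1, inner_val l h0 h1]
  calc (∫⁻ x₁ : ℝ, ∫⁻ y₁ : ℝ, ∫⁻ x₂ : ℝ, ∫⁻ y₂ : ℝ,
        Jind x₁ * Jind y₁ * Jind x₂ * Jind y₂ * Cind l (x₁ - x₂) (y₁ - y₂))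
      = ∫⁻ x₁ : ℝ, ∫⁻ x₂ : ℝ, ∫⁻ y₁ : ℝ, ∫⁻ y₂ : ℝ,
          Jind x₁ * Jind y₁ * Jind x₂ * Jind y₂ * Cind l (x₁ - x₂) (y₁ - y₂) :=
        lintegral_congr fun x₁ => hswap x₁
    _ = ∫⁻ x₁ : ℝ, ∫⁻ x₂ : ℝ, Jind x₁ * Jind x₂ * ENNReal.ofReal (phi l (x₁ - x₂)) :=
        lintegral_congr fun x₁ => lintegral_congr fun x₂ => step23 x₁ x₂
    _ = ∫⁻ u : ℝ, ENNReal.ofReal (phi l u) * ENNReal.ofReal (1 - |u|) :=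
        strip (fun u => ENNReal.ofReal (phi l u)) mphi
    _ = ∫⁻ u : ℝ, ENNReal.ofReal (phi l u * (1 - |u|)) :=
        lintegral_congr fun u => (ENNReal.ofReal_mul (phi_nonneg l h0 h1 u)).symm
    _ = ENNReal.ofReal (π * l ^ 2 - (8 / 3) * l ^ 3 + l ^ 4 / 2) := by
        have hpsi : (fun u : ℝ => phi l u * (1 - |u|))
            = (Set.Icc (-l) l).indicator
                (fun u => (2 * Real.sqrt (l ^ 2 - u ^ 2) - (l ^ 2 - u ^ 2)) * (1 - |u|)) := by
          funext u
          rw [Set.indicator_apply]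
          split_ifs with h
          · rw [Set.mem_Icc] at h
            have hu : u ^ 2 ≤ l ^ 2 := by nlinarith [h.1, h.2]
            rw [phi, if_pos hu]
          · have hu : ¬ u ^ 2 ≤ l ^ 2 := by
              rw [Set.mem_Icc] at h
              push_neg at h
              intro hc
              rcases le_or_gt (-l) u with h' | h'
              · have := h h'
                nlinarith
              · nlinarith
            rw [phi, if_neg hu, zero_mul]
        have hcont : Continuous fun u : ℝ =>
            (2 * Real.sqrt (l ^ 2 - u ^ 2) - (l ^ 2 - u ^ 2)) * (1 - |u|) :=
          ((continuous_const.mul (sqrt_cont l)).sub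
            (continuous_const.sub (continuous_pow 2))).mul
            (continuous_const.sub continuous_abs)
        have hint : Integrable (fun u : ℝ => phi l u * (1 - |u|)) volume := by
          rw [hpsi]
          exact (hcont.integrableOn_Icc).integrable_indicator measurableSet_Icc
        have hnn : 0 ≤ᵐ[volume] fun u : ℝ => phi l u * (1 - |u|) := by
          refine ae_of_all _ fun u => ?_
          simp only [Pi.zero_apply]
          by_cases hu : u ^ 2 ≤ l ^ 2
          · have habs : |u| ≤ l := by nlinarith [sq_abs u, abs_nonneg u]
            exact mul_nonneg (phi_nonneg l h0 h1 u) (by linarith)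
          · simp only [phi, if_neg hu, zero_mul, le_refl]
        rw [← ofReal_integral_eq_lintegral_ofReal hint hnn]
        congr 1
        rw [hpsi, integral_indicator measurableSet_Icc,
          MeasureTheory.integral_Icc_eq_integral_Ioc,
          ← intervalIntegral.integral_of_le (by linarith : -l ≤ l)]
        exact Kval l h0 h1
end

section
/- Let O be a nonempty finite set of even cardinality and let w : O × O → ℝ be a cost function. Then the minimum, over all assignments Ω (finite sets of ordered pairs of distinct elements of O in which every element of O occurs in exactly one pair), of ∑_{(a,b) ∈ Ω} w(a,b) is equal to the minimum, over all perfect matchings M of the complete graph on O, of ∑_{{u,v} ∈ M} min(w(u,v), w(v,u)). (Hence the set of object-to-arm assignments minimizing total transfer cost is obtained by minimum-weight perfect matching on the undirected transfer graph whose edge weights keep the cheaper of the two orientations.) -/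
open Classical in
/-- Orientation of an edge choosing the cheaper direction. -/
noncomputable def orientAux {O : Type*} (w : O × O → ℝ) (e : Sym2 O) : O × O :=
  if w e.out ≤ w e.out.swap then e.out else e.out.swap

lemma orientAux_mk {O : Type*} (w : O × O → ℝ) (e : Sym2 O) :
    Sym2.mk (orientAux w e).1 (orientAux w e).2 = e := by
  unfold orientAux
  split
  · exact e.out_eq
  · rw [show Sym2.mk e.out.swap.1 e.out.swap.2 = Sym2.mk e.out.1 e.out.2 by
      rcases e.out with ⟨a, b⟩; exact (Sym2.eq_swap).symm]
    exact e.out_eq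

lemma orientAux_w {O : Type*} (w : O × O → ℝ) (e : Sym2 O) :
    w (orientAux w e) = min (w e.out) (w e.out.swap) := by
  unfold orientAux
  split
  · exact (min_eq_left (by assumption)).symm
  · exact (min_eq_right (le_of_not_ge (by assumption))).symm

lemma lift_eq_min {O : Type*} (w : O × O → ℝ) (p : O × O) :
    Sym2.lift ⟨fun u v => min (w (u, v)) (w (v, u)), fun u v => min_comm _ _⟩ (Sym2.mk p.1 p.2)
      = min (w p) (w p.swap) := by
  rcases p with ⟨a, b⟩
  rfl

lemma lift_eq_w_orientAux {O : Type*} (w : O × O → ℝ) (e : Sym2 O) :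
    Sym2.lift ⟨fun u v => min (w (u, v)) (w (v, u)), fun u v => min_comm _ _⟩ e
      = w (orientAux w e) := by
  conv_lhs => rw [← e.out_eq]
  rw [lift_eq_min]
  exact (orientAux_w w e).symm

instance subgraphFinite {O : Type*} [Finite O] (G : SimpleGraph O) : Finite G.Subgraph := by
  have : Finite (Set O × (O → O → Prop)) := by infer_instance
  exact Finite.of_injective (fun M : G.Subgraph => (M.verts, M.Adj))
    (by rintro ⟨⟩ ⟨⟩ h; simp_all [SimpleGraph.Subgraph.ext_iff, Prod.ext_iff])

/-- The subgraph of the complete graph induced by an assignment. -/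
def assignSubgraph {O : Type*} (Ω : Finset (O × O)) (hne : ∀ p ∈ Ω, p.1 ≠ p.2) :
    (⊤ : SimpleGraph O).Subgraph where
  verts := Set.univ
  Adj x y := (x, y) ∈ Ω ∨ (y, x) ∈ Ω
  adj_sub := by
    rintro x y (h | h)
    · exact SimpleGraph.top_adj x y |>.mpr (hne _ h)
    · exact SimpleGraph.top_adj x y |>.mpr (Ne.symm (hne _ h))
  edge_vert := fun _ => Set.mem_univ _
  symm := ⟨fun x y h => h.symm⟩

@[simp] lemma assignSubgraph_adj {O : Type*} (Ω : Finset (O × O))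
    (hne : ∀ p ∈ Ω, p.1 ≠ p.2) (x y : O) :
    (assignSubgraph Ω hne).Adj x y ↔ (x, y) ∈ Ω ∨ (y, x) ∈ Ω := Iff.rfl

/-- The minimum total transfer cost over all assignments (sets of ordered pairs of
distinct elements in which every element occurs exactly once) equals the minimum,
over all perfect matchings of the complete graph on `O`, of the sum over matched
edges of the cheaper of the two orientations of the cost `w`. -/
theorem stmt_16 (O : Type*) [Fintype O] [DecidableEq O] [Nonempty O]
    (heven : Even (Fintype.card O)) (w : O × O → ℝ) :
    sInf {c : ℝ | ∃ Ω : Finset (O × O),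
        (∀ p ∈ Ω, p.1 ≠ p.2) ∧
        (∀ o : O, ∃! p, p ∈ Ω ∧ (p.1 = o ∨ p.2 = o)) ∧
        c = ∑ p ∈ Ω, w p}
      = sInf {c : ℝ | ∃ M : (⊤ : SimpleGraph O).Subgraph,
        M.IsPerfectMatching ∧
        c = ∑ᶠ e ∈ M.edgeSet,
          Sym2.lift ⟨fun u v => min (w (u, v)) (w (v, u)),
            fun u v => min_comm _ _⟩ e} := by
  classical
  set f : Sym2 O → ℝ := Sym2.lift ⟨fun u v => min (w (u, v)) (w (v, u)),
      fun u v => min_comm _ _⟩ with hf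
  set L := {c : ℝ | ∃ Ω : Finset (O × O),
        (∀ p ∈ Ω, p.1 ≠ p.2) ∧
        (∀ o : O, ∃! p, p ∈ Ω ∧ (p.1 = o ∨ p.2 = o)) ∧
        c = ∑ p ∈ Ω, w p} with hL
  set R := {c : ℝ | ∃ M : (⊤ : SimpleGraph O).Subgraph,
        M.IsPerfectMatching ∧ c = ∑ᶠ e ∈ M.edgeSet, f e} with hR
  -- Step 1: L is nonempty (construct an explicit assignment).
  have hLne : L.Nonempty := by
    obtain ⟨k, hk⟩ := heven
    have e : O ≃ Fin (k + k) := Fintype.equivFinOfCardEq hk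
    refine ⟨_, Finset.image (fun i : Fin k =>
        (e.symm (Fin.castAdd k i), e.symm (Fin.natAdd k i))) Finset.univ, ?_, ?_, rfl⟩
    · intro p hp
      simp only [Finset.mem_image] at hp
      obtain ⟨i, -, rfl⟩ := hp
      simp only [ne_eq, EmbeddingLike.apply_eq_iff_eq]
      intro h
      have := congrArg Fin.val h
      simp [Fin.castAdd, Fin.natAdd] at this
      omega
    · intro o
      rcases lt_or_ge ((e o : Fin (k+k)) : ℕ) k with hlt | hge
      · refine ⟨(e.symm (Fin.castAdd k ⟨e o, hlt⟩), e.symm (Fin.natAdd k ⟨e o, hlt⟩)), ?_, ?_⟩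
        · constructor
          · exact Finset.mem_image_of_mem _ (Finset.mem_univ _)
          · left
            rw [show Fin.castAdd k ⟨(e o : ℕ), hlt⟩ = e o by ext; simp [Fin.castAdd]]
            simp
        · rintro q ⟨hq, hqo⟩
          simp only [Finset.mem_image] at hq
          obtain ⟨j, -, rfl⟩ := hq
          rcases hqo with h | h
          · have hje : Fin.castAdd k j = e o := by
              have := congrArg e h; simpa using this
            have hj : (j : ℕ) = (e o : ℕ) := by
              have := congrArg Fin.val hje; simpa [Fin.castAdd] using this
            simp only [Prod.mk.injEq, EmbeddingLike.apply_eq_iff_eq]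
            constructor <;> · ext; simp [Fin.castAdd, Fin.natAdd]; omega
          · have hje : Fin.natAdd k j = e o := by
              have := congrArg e h; simpa using this
            have := congrArg Fin.val hje
            simp [Fin.natAdd] at this
            omega
      · refine ⟨(e.symm (Fin.castAdd k ⟨(e o : ℕ) - k, by omega⟩),
            e.symm (Fin.natAdd k ⟨(e o : ℕ) - k, by omega⟩)), ?_, ?_⟩
        · constructor
          · exact Finset.mem_image_of_mem _ (Finset.mem_univ _)
          · right
            rw [show Fin.natAdd k ⟨(e o : ℕ) - k, by omega⟩ = e o by
              ext; simp [Fin.natAdd]; omega]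
            simp
        · rintro q ⟨hq, hqo⟩
          simp only [Finset.mem_image] at hq
          obtain ⟨j, -, rfl⟩ := hq
          rcases hqo with h | h
          · have hje : Fin.castAdd k j = e o := by
              have := congrArg e h; simpa using this
            have := congrArg Fin.val hje
            simp [Fin.castAdd] at this
            omega
          · have hje : Fin.natAdd k j = e o := by
              have := congrArg e h; simpa using this
            have hj : k + (j : ℕ) = (e o : ℕ) := by
              have := congrArg Fin.val hje; simpa [Fin.natAdd] using this
            simp only [Prod.mk.injEq, EmbeddingLike.apply_eq_iff_eq]
            constructor <;> · ext; simp [Fin.castAdd, Fin.natAdd]; omega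
  -- Step 2: for every c ∈ L there is d ∈ R with d ≤ c.
  have hAB : ∀ c ∈ L, ∃ d ∈ R, d ≤ c := by
    rintro c ⟨Ω, hne, huniq, rfl⟩
    refine ⟨∑ p ∈ Ω, min (w p) (w p.swap), ⟨assignSubgraph Ω hne, ⟨?_, fun v => Set.mem_univ v⟩, ?_⟩,
      Finset.sum_le_sum fun p _ => min_le_left _ _⟩
    · -- IsMatching
      intro v _
      obtain ⟨p, ⟨hpΩ, hpv⟩, hpu⟩ := huniq v
      refine ⟨if p.1 = v then p.2 else p.1, ?_, ?_⟩
      · by_cases h1 : p.1 = v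
        · simp only [h1, if_true]
          rw [assignSubgraph_adj]
          left; rw [← h1]; exact hpΩ
        · have h2 : p.2 = v := hpv.resolve_left h1
          simp only [h1, if_false]
          rw [assignSubgraph_adj]
          right; rw [← h2]; exact hpΩ
      · intro u hu
        rw [assignSubgraph_adj] at hu
        rcases hu with hu | hu
        · have := hpu (v, u) ⟨hu, Or.inl rfl⟩
          subst this
          simp
        · have := hpu (u, v) ⟨hu, Or.inr rfl⟩
          have h1 : ¬ (u = v) := fun h => hne (u, v) hu (by simpa using h)
          subst this
          simp [h1]
    · -- sum equality
      have hinj : ∀ p ∈ Ω, ∀ q ∈ Ω, Sym2.mk p.1 p.2 = Sym2.mk q.1 q.2 → p = q := by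
        rintro ⟨a, b⟩ hp ⟨x, y⟩ hq h
        rw [Sym2.mk_eq_mk_iff] at h
        rcases h with h | h
        · exact h
        · simp only [Prod.swap_prod_mk, Prod.mk.injEq] at h
          obtain ⟨rfl, rfl⟩ := h
          obtain ⟨r, -, hr⟩ := huniq a
          have h1 := hr (a, b) ⟨hp, Or.inl rfl⟩
          have h2 := hr (b, a) ⟨hq, Or.inr rfl⟩
          exact h1.trans h2.symm
      have hset : (assignSubgraph Ω hne).edgeSet = ↑(Ω.image (fun p : O × O => Sym2.mk p.1 p.2)) := by
        ext e
        induction e using Sym2.ind with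
        | _ a b =>
          rw [SimpleGraph.Subgraph.mem_edgeSet, assignSubgraph_adj]
          simp only [Finset.coe_image, Set.mem_image, Finset.mem_coe]
          constructor
          · rintro (h | h)
            · exact ⟨(a, b), h, rfl⟩
            · exact ⟨(b, a), h, Sym2.eq_swap.symm⟩
          · rintro ⟨p, hp, hpe⟩
            rcases (Sym2.mk_eq_mk_iff (q := (a, b))).mp hpe with h | h
            · left; rw [← h]; exact hp
            · right
              have : p = (b, a) := by
                rcases p with ⟨x, y⟩
                simpa [Prod.ext_iff] using h
              rw [← this]; exact hp
      rw [hset, finsum_mem_coe_finset, Finset.sum_image hinj]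
      refine Finset.sum_congr rfl fun p _ => ?_
      rw [hf, lift_eq_min]
  -- Step 3: R ⊆ L.
  have hBA : R ⊆ L := by
    rintro c ⟨M, ⟨hmatch, hspan⟩, rfl⟩
    have hfin : M.edgeSet.Finite := Set.toFinite _
    refine ⟨hfin.toFinset.image (orientAux w), ?_, ?_, ?_⟩
    · intro p hp
      simp only [Finset.mem_image, Set.Finite.mem_toFinset] at hp
      obtain ⟨ed, hed, rfl⟩ := hp
      have hmem : Sym2.mk (orientAux w ed).1 (orientAux w ed).2 ∈ M.edgeSet := by rw [orientAux_mk]; exact hed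
      have hadj : M.Adj (orientAux w ed).1 (orientAux w ed).2 := by
        rw [← SimpleGraph.Subgraph.mem_edgeSet]; exact hmem
      exact (SimpleGraph.top_adj _ _).mp (M.adj_sub hadj)
    · intro o
      obtain ⟨v, hv, hvu⟩ := hmatch (hspan o)
      have hedge : Sym2.mk o v ∈ M.edgeSet := SimpleGraph.Subgraph.mem_edgeSet.mpr hv
      refine ⟨orientAux w (Sym2.mk o v), ⟨?_, ?_⟩, ?_⟩
      · exact Finset.mem_image_of_mem _ (hfin.mem_toFinset.mpr hedge)
      · have hmem : o ∈ Sym2.mk (orientAux w (Sym2.mk o v)).1 (orientAux w (Sym2.mk o v)).2 := by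
          rw [orientAux_mk]; exact Sym2.mem_mk_left _ _
        rcases hp : orientAux w (Sym2.mk o v) with ⟨a, b⟩
        rw [hp] at hmem
        rcases Sym2.mem_iff.mp hmem with h | h
        · left; exact h.symm
        · right; exact h.symm
      · rintro q ⟨hq, hqo⟩
        simp only [Finset.mem_image, Set.Finite.mem_toFinset] at hq
        obtain ⟨ed, hed, rfl⟩ := hq
        have hadj : M.Adj (orientAux w ed).1 (orientAux w ed).2 := by
          rw [← SimpleGraph.Subgraph.mem_edgeSet, orientAux_mk]; exact hed
        have hedeq : ed = Sym2.mk o v := by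
          rcases hqo with h | h
          · have hadj' : M.Adj o (orientAux w ed).2 := h ▸ hadj
            have hv2 := hvu _ hadj'
            rw [← orientAux_mk w ed]
            rcases hq2 : orientAux w ed with ⟨a, b⟩
            rw [hq2] at h hv2
            simp only at h hv2
            rw [h, hv2]
          · have hadj' : M.Adj o (orientAux w ed).1 := h ▸ hadj.symm
            have hv2 := hvu _ hadj'
            rw [← orientAux_mk w ed]
            rcases hq2 : orientAux w ed with ⟨a, b⟩
            rw [hq2] at h hv2
            simp only at h hv2
            rw [h, hv2]
            exact Sym2.eq_swap
        rw [hedeq]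
    · rw [Finset.sum_image (by
        intro x hx y hy hxy
        have := congrArg (fun p : O × O => Sym2.mk p.1 p.2) hxy
        rwa [orientAux_mk, orientAux_mk] at this), ← finsum_mem_coe_finset,
        hfin.coe_toFinset]
      exact finsum_mem_congr rfl fun e _ => (lift_eq_w_orientAux w e)
  -- Conclusion
  have hRne : R.Nonempty := by
    obtain ⟨c, hc⟩ := hLne
    obtain ⟨d, hd, -⟩ := hAB c hc
    exact ⟨d, hd⟩
  have hLfin : L.Finite := by
    apply Set.Finite.subset (Set.finite_range (fun Ω : Finset (O × O) => ∑ p ∈ Ω, w p))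
    rintro c ⟨Ω, -, -, rfl⟩
    exact ⟨Ω, rfl⟩
  have hRfin : R.Finite := by
    apply Set.Finite.subset (Set.finite_range
      (fun M : (⊤ : SimpleGraph O).Subgraph => ∑ᶠ e ∈ M.edgeSet, f e))
    rintro c ⟨M, -, rfl⟩
    exact ⟨M, rfl⟩
  apply le_antisymm
  · exact csInf_le_csInf hLfin.bddBelow hRne hBA
  · refine le_csInf hLne fun c hc => ?_
    obtain ⟨d, hd, hdc⟩ := hAB c hc
    exact le_trans (csInf_le hRfin.bddBelow hd) hdc
end
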